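/- Let Ω ⊂ ℂ be a nonempty open set and let (f_n) be a sequence of holomorphic functions on Ω that is locally bounded in L¹, i.e. for every compact set K ⊂ Ω one has sup_n ∫_K |f_n(z)| dA(z) < ∞. Then there exists a subsequence (f_{n_k}) and a holomorphic function f on Ω such that f_{n_k} → f locally uniformly on Ω, and moreover for every integer m ≥ 0 the derivatives f_{n_k}^{(m)} converge locally uniformly on Ω to f^{(m)}. -/

import Mathlib

open Filter MeasureTheory

section MontelAux
open Metric Set Topology
open scoped Real
open Filter MeasureTheory Metric Set Topology
open scoped Real

-- circle mean value bound
lemma circle_bound {f : ℂ → ℂ} {z : ℂ} {r : ℝ} (hr : 0 < r)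
    (hf : DifferentiableOn ℂ f (closedBall z r)) :
    2 * π * ‖f z‖ ≤ ∫ θ in (0:ℝ)..(2*π), ‖f (circleMap z r θ)‖ := by
  have hd : DiffContOnCl ℂ f (ball z r) := by
    apply DifferentiableOn.diffContOnCl
    rwa [closure_ball z hr.ne']
  have key := hd.circleIntegral_sub_inv_smul (w := z) (mem_ball_self hr)
  have h1 : ‖∮ w in C(z, r), (w - z)⁻¹ • f w‖ = 2 * π * ‖f z‖ := by
    rw [key]
    simp [norm_smul, abs_of_pos Real.pi_pos]
  rw [← h1]
  rw [circleIntegral]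
  refine le_trans (intervalIntegral.norm_integral_le_integral_norm (by positivity)) ?_
  apply le_of_eq
  apply intervalIntegral.integral_congr
  intro θ _
  show ‖_ • _‖ = _
  rw [deriv_circleMap, circleMap_sub_center, norm_smul, norm_smul]
  rw [norm_inv]
  simp only [norm_mul, Complex.norm_I, mul_one, norm_circleMap_zero]
  rw [abs_of_pos hr]
  field_simp

lemma z_add_polar (z : ℂ) (r θ : ℝ) :
    z + Complex.polarCoord.symm (r, θ) = circleMap z r θ := by
  simp [circleMap, Complex.polarCoord_symm_apply, Complex.exp_mul_I]

lemma submean {f : ℂ → ℂ} {z : ℂ} {δ : ℝ} (hδ : 0 < δ)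
    (hf : DifferentiableOn ℂ f (closedBall z δ)) :
    2 * π * (δ/2)^2 * ‖f z‖ ≤ ∫ w in closedBall z δ, ‖f w‖ := by
  have hcont : ContinuousOn f (closedBall z δ) := hf.continuousOn
  -- continuity of the polar integrand on the compact box
  have hsymm_cont : Continuous fun p : ℝ × ℝ => Complex.polarCoord.symm p := by
    simp only [Complex.polarCoord_symm_apply]
    fun_prop
  have hbox : ∀ p : ℝ × ℝ, p ∈ (Icc (δ/2) δ) ×ˢ (Icc (-π) π) →
      z + Complex.polarCoord.symm p ∈ closedBall z δ := by
    rintro ⟨r, θ⟩ ⟨hr, -⟩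
    simp only [mem_closedBall, dist_eq_norm, add_sub_cancel_left,
      Complex.norm_polarCoord_symm]
    rw [abs_of_nonneg (le_trans (by positivity) hr.1)]
    exact hr.2
  have hFcont : ContinuousOn (fun p : ℝ × ℝ => ‖f (z + Complex.polarCoord.symm p)‖)
      ((Icc (δ/2) δ) ×ˢ (Icc (-π) π)) := by
    apply ContinuousOn.norm
    exact hcont.comp ((continuous_const.add hsymm_cont).continuousOn) hbox
  have hboxcompact : IsCompact ((Icc (δ/2) δ) ×ˢ (Icc (-π) π)) :=
    isCompact_Icc.prod isCompact_Icc
  have hFint : IntegrableOn (fun p : ℝ × ℝ => ‖f (z + Complex.polarCoord.symm p)‖)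
      ((Ioo (δ/2) δ) ×ˢ (Ioo (-π) π)) := by
    apply (hFcont.integrableOn_compact hboxcompact).mono_set
    exact prod_mono Ioo_subset_Icc_self Ioo_subset_Icc_self
  have hPint : IntegrableOn (fun p : ℝ × ℝ => p.1 • ‖f (z + Complex.polarCoord.symm p)‖)
      ((Ioo (δ/2) δ) ×ˢ (Ioo (-π) π)) := by
    apply (((continuousOn_fst).smul hFcont).integrableOn_compact hboxcompact).mono_set
    exact prod_mono Ioo_subset_Icc_self Ioo_subset_Icc_self
  set S := (Ioo (δ/2) δ) ×ˢ (Ioo (-π) π) with hS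
  have hS_meas : MeasurableSet S := measurableSet_Ioo.prod measurableSet_Ioo
  have hS_sub : S ⊆ Complex.polarCoord.target := by
    rw [Complex.polarCoord_target]
    exact prod_mono (Ioo_subset_Ioi_self.trans (Ioi_subset_Ioi (by positivity))) subset_rfl
  -- step 1 : polar coordinates
  set A : Set ℂ := (fun w : ℂ => ‖w‖) ⁻¹' (Ioo (δ/2) δ) with hA
  have hA_meas : MeasurableSet A := measurableSet_Ioo.preimage continuous_norm.measurable
  have polar := Complex.integral_comp_polarCoord_symm
    (A.indicator fun w => ‖f (z + w)‖)
  have hS_sub' : S ⊆ polarCoord.target := hS_sub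
  have lhs_eq : (∫ p in polarCoord.target,
        p.1 • (A.indicator fun w => ‖f (z + w)‖) (Complex.polarCoord.symm p))
      = ∫ p in S, p.1 • ‖f (z + Complex.polarCoord.symm p)‖ := by
    have htarget_meas : MeasurableSet polarCoord.target :=
      polarCoord.open_target.measurableSet
    rw [setIntegral_congr_fun htarget_meas
      (g := S.indicator fun p : ℝ × ℝ => p.1 • ‖f (z + Complex.polarCoord.symm p)‖) ?_]
    · rw [setIntegral_indicator hS_meas, inter_eq_self_of_subset_right hS_sub']
    · rintro ⟨r, θ⟩ hp
      have hp1 : (0:ℝ) < r := hp.1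
      have hp2 : θ ∈ Ioo (-π) π := hp.2
      have habs : ‖Complex.polarCoord.symm (r, θ)‖ = r := by
        rw [Complex.norm_polarCoord_symm, abs_of_pos hp1]
      show r • (A.indicator (fun w => ‖f (z + w)‖) (Complex.polarCoord.symm (r, θ)))
          = S.indicator (fun p : ℝ × ℝ => p.1 • ‖f (z + Complex.polarCoord.symm p)‖) (r, θ)
      simp only [Set.indicator_apply, hA, mem_preimage, habs, hS, Set.mem_prod, hp2,
        and_true]
      by_cases h : r ∈ Ioo (δ/2) δ
      · rw [indicator_of_mem, if_pos h]
        rw [mem_preimage, habs]; exact h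
      · rw [indicator_of_notMem, smul_zero, if_neg h]
        rw [mem_preimage, habs]; exact h
  -- step 2 : translation invariance and monotonicity of the area integral
  have hGint : IntegrableOn (fun w => ‖f (z + w)‖) (ball (0:ℂ) δ) := by
    have : ContinuousOn (fun w => ‖f (z + w)‖) (closedBall (0:ℂ) δ) := by
      apply ContinuousOn.norm
      apply hcont.comp (continuous_const.add continuous_id).continuousOn
      intro w hw
      simpa [dist_eq_norm] using mem_closedBall_zero_iff.mp hw
    exact (this.integrableOn_compact (isCompact_closedBall _ _)).mono_set
      ball_subset_closedBall
  have rhs_le : (∫ w : ℂ, (A.indicator fun w => ‖f (z + w)‖) w)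
      ≤ ∫ w in closedBall z δ, ‖f w‖ := by
    rw [integral_indicator hA_meas]
    have h1 : (∫ w in A, ‖f (z + w)‖) ≤ ∫ w in ball (0:ℂ) δ, ‖f (z + w)‖ := by
      apply setIntegral_mono_set hGint
      · filter_upwards with w using norm_nonneg _
      · apply HasSubset.Subset.eventuallyLE
        intro w hw
        rw [mem_ball_zero_iff]
        exact hw.2
    have h2 : (∫ w in ball (0:ℂ) δ, ‖f (z + w)‖) = ∫ w in ball z δ, ‖f w‖ := by
      have hemb : MeasurableEmbedding (fun w : ℂ => z + w) :=
        (MeasurableEquiv.addLeft z).measurableEmbedding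
      have hmp : MeasurePreserving (fun w : ℂ => z + w) volume volume :=
        measurePreserving_add_left volume z
      have := hmp.setIntegral_preimage_emb hemb (fun w => ‖f w‖) (ball z δ)
      rw [← this]
      congr 1
      ext w
      simp [dist_eq_norm]
    have h3 : (∫ w in ball z δ, ‖f w‖) ≤ ∫ w in closedBall z δ, ‖f w‖ := by
      apply setIntegral_mono_set
        ((hcont.norm).integrableOn_compact (isCompact_closedBall _ _))
      · filter_upwards with w using norm_nonneg _
      · exact HasSubset.Subset.eventuallyLE ball_subset_closedBall
    linarith
  have key1 : (∫ p in S, p.1 • ‖f (z + Complex.polarCoord.symm p)‖)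
      ≤ ∫ w in closedBall z δ, ‖f w‖ := by
    rw [← lhs_eq]; rw [polar]; exact rhs_le
  -- Fubini
  have hFint' : Integrable (fun p : ℝ × ℝ => ‖f (z + Complex.polarCoord.symm p)‖)
      (((volume : Measure ℝ).restrict (Ioo (δ/2) δ)).prod
        ((volume : Measure ℝ).restrict (Ioo (-π) π))) := by
    rw [Measure.prod_restrict]
    have := hFint
    rwa [hS, Measure.volume_eq_prod] at this
  have hfub : (∫ p in S, ‖f (z + Complex.polarCoord.symm p)‖)
      = ∫ r in Ioo (δ/2) δ, (∫ θ in Ioo (-π) π,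
          ‖f (z + Complex.polarCoord.symm (r, θ))‖) := by
    rw [hS, Measure.volume_eq_prod]
    apply setIntegral_prod
    have := hFint
    rwa [hS, Measure.volume_eq_prod] at this
  have hmarg : IntegrableOn (fun r => ∫ θ in Ioo (-π) π,
      ‖f (z + Complex.polarCoord.symm (r, θ))‖) (Ioo (δ/2) δ) := by
    exact hFint'.integral_prod_left
  have hinner : ∀ r ∈ Ioo (δ/2) δ,
      2 * π * ‖f z‖ ≤ ∫ θ in Ioo (-π) π, ‖f (z + Complex.polarCoord.symm (r, θ))‖ := by
    intro r hr
    have hr0 : (0:ℝ) < r := lt_trans (by positivity) hr.1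
    have h1 := circle_bound hr0 (hf.mono (closedBall_subset_closedBall hr.2.le))
    have hper : Function.Periodic (fun θ => ‖f (circleMap z r θ)‖) (2*π) := by
      intro θ
      simp only [periodic_circleMap z r θ]
    have h2 : (∫ θ in (0:ℝ)..(2*π), ‖f (circleMap z r θ)‖)
        = ∫ θ in (-π)..(π), ‖f (circleMap z r θ)‖ := by
      have h := hper.intervalIntegral_add_eq (-π) 0
      rw [zero_add] at h
      rw [← h]
      congr 1
      ring
    have h3 : (∫ θ in (-π)..(π), ‖f (circleMap z r θ)‖)
        = ∫ θ in Ioo (-π) π, ‖f (circleMap z r θ)‖ := by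
      rw [intervalIntegral.integral_of_le (by linarith [Real.pi_pos]),
        integral_Ioc_eq_integral_Ioo]
    have h4 : (∫ θ in Ioo (-π) π, ‖f (circleMap z r θ)‖)
        = ∫ θ in Ioo (-π) π, ‖f (z + Complex.polarCoord.symm (r, θ))‖ := by
      apply setIntegral_congr_fun measurableSet_Ioo
      intro θ _
      show ‖f (circleMap z r θ)‖ = ‖f (z + Complex.polarCoord.symm (r, θ))‖
      rw [z_add_polar]
    rw [← h4, ← h3, ← h2]
    exact h1
  have hvol : (volume (Ioo (δ/2) δ)).toReal = δ/2 := by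
    rw [Real.volume_Ioo, ENNReal.toReal_ofReal (by linarith)]
    ring
  have houter : (δ/2) * (2*π*‖f z‖)
      ≤ ∫ r in Ioo (δ/2) δ, (∫ θ in Ioo (-π) π,
          ‖f (z + Complex.polarCoord.symm (r, θ))‖) := by
    have hc : (∫ _r in Ioo (δ/2) δ, (2*π*‖f z‖)) = (δ/2) * (2*π*‖f z‖) := by
      rw [setIntegral_const, measureReal_def, hvol, smul_eq_mul]
    rw [← hc]
    exact setIntegral_mono_on (integrableOn_const
      (by rw [Real.volume_Ioo]; exact ENNReal.ofReal_ne_top)) hmarg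
      measurableSet_Ioo hinner
  have hsmul : (δ/2) * (∫ p in S, ‖f (z + Complex.polarCoord.symm p)‖)
      ≤ ∫ p in S, p.1 • ‖f (z + Complex.polarCoord.symm p)‖ := by
    have : (δ/2) * (∫ p in S, ‖f (z + Complex.polarCoord.symm p)‖)
        = ∫ p in S, (δ/2) • ‖f (z + Complex.polarCoord.symm p)‖ := by
      rw [integral_smul, smul_eq_mul]
    rw [this]
    apply setIntegral_mono_on (hFint.smul (δ/2)) hPint hS_meas
    rintro ⟨r, θ⟩ hp
    have : δ/2 ≤ r := hp.1.1.le
    simp only [smul_eq_mul]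
    exact mul_le_mul_of_nonneg_right this (norm_nonneg _)
  calc 2 * π * (δ/2)^2 * ‖f z‖ = (δ/2) * ((δ/2) * (2*π*‖f z‖)) := by ring
    _ ≤ (δ/2) * (∫ p in S, ‖f (z + Complex.polarCoord.symm p)‖) := by
        apply mul_le_mul_of_nonneg_left _ (by positivity)
        rw [hfub]
        exact houter
    _ ≤ ∫ p in S, p.1 • ‖f (z + Complex.polarCoord.symm p)‖ := hsmul
    _ ≤ ∫ w in closedBall z δ, ‖f w‖ := key1

section Bounds
variable {Ω : Set ℂ} (hΩ_open : IsOpen Ω)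
variable {f : ℕ → ℂ → ℂ} (h_holo : ∀ n, DifferentiableOn ℂ (f n) Ω)
variable (h_L1 : ∀ K ⊆ Ω, IsCompact K → ∃ C : ℝ, ∀ n, ∫ z in K, ‖f n z‖ ≤ C)

include hΩ_open h_holo h_L1 in
lemma sup_bound {K : Set ℂ} (hKΩ : K ⊆ Ω) (hK : IsCompact K) :
    ∃ M : ℝ, 0 ≤ M ∧ ∀ n, ∀ z ∈ K, ‖f n z‖ ≤ M := by
  obtain ⟨δ, hδ, hδsub⟩ := hK.exists_cthickening_subset_open hΩ_open hKΩ
  obtain ⟨C, hC⟩ := h_L1 (cthickening δ K) hδsub hK.cthickening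
  set c : ℝ := 2 * π * (δ/2)^2 with hc
  have hcpos : 0 < c := by
    rw [hc]; positivity
  refine ⟨max 0 (C / c), le_max_left _ _, fun n z hz => ?_⟩
  have hball : closedBall z δ ⊆ cthickening δ K := closedBall_subset_cthickening hz δ
  have h1 := submean hδ ((h_holo n).mono (hball.trans hδsub))
  have h2 : (∫ w in closedBall z δ, ‖f n w‖) ≤ ∫ w in cthickening δ K, ‖f n w‖ := by
    apply setIntegral_mono_set
    · exact (((h_holo n).continuousOn.mono hδsub).norm).integrableOn_compact hK.cthickening
    · filter_upwards with w using norm_nonneg _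
    · exact HasSubset.Subset.eventuallyLE hball
  have h3 : ‖f n z‖ ≤ C / c := by
    rw [le_div_iff₀ hcpos]
    calc ‖f n z‖ * c = c * ‖f n z‖ := by ring
      _ ≤ C := by
          rw [hc]
          calc 2 * π * (δ/2)^2 * ‖f n z‖ ≤ ∫ w in closedBall z δ, ‖f n w‖ := h1
            _ ≤ ∫ w in cthickening δ K, ‖f n w‖ := h2
            _ ≤ C := hC n
  exact h3.trans (le_max_right _ _)

include hΩ_open h_holo h_L1 in
lemma deriv_bound {K : Set ℂ} (hKΩ : K ⊆ Ω) (hK : IsCompact K) :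
    ∃ M : ℝ, 0 ≤ M ∧ ∀ n, ∀ z ∈ K, ‖deriv (f n) z‖ ≤ M := by
  obtain ⟨δ, hδ, hδsub⟩ := hK.exists_cthickening_subset_open hΩ_open hKΩ
  obtain ⟨M, hM0, hM⟩ := sup_bound hΩ_open h_holo h_L1 hδsub hK.cthickening
  refine ⟨M / δ, by positivity, fun n z hz => ?_⟩
  have hball : closedBall z δ ⊆ Ω :=
    (closedBall_subset_cthickening hz δ).trans hδsub
  rw [← Complex.cderiv_eq_deriv hΩ_open (h_holo n) hδ hball]
  apply Complex.norm_cderiv_le hδ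
  intro w hw
  exact hM n w ((sphere_subset_closedBall.trans (closedBall_subset_cthickening hz δ)) hw)

include hΩ_open h_holo h_L1 in
lemma equicont : ∀ z ∈ Ω, ∀ ε : ℝ, 0 < ε → ∃ η > 0, ∀ w ∈ Ω, dist w z < η →
    ∀ n, dist (f n w) (f n z) < ε := by
  intro z hz ε hε
  obtain ⟨δ₀, hδ₀, hball⟩ := (Metric.isOpen_iff.mp hΩ_open) z hz
  have hcb : closedBall z (δ₀/2) ⊆ Ω := (closedBall_subset_ball (by linarith)).trans hball
  obtain ⟨M, hM0, hM⟩ := deriv_bound hΩ_open h_holo h_L1 hcb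
    (isCompact_closedBall _ _)
  set η := min (δ₀/2) (ε / (M+1)) with hη
  refine ⟨η, lt_min (by positivity) (by positivity), fun w hw hdist n => ?_⟩
  have hwball : w ∈ closedBall z (δ₀/2) := by
    rw [mem_closedBall]
    exact le_trans (le_of_lt hdist) (min_le_left _ _)
  have hlip : ‖f n w - f n z‖ ≤ (M+1) * ‖w - z‖ := by
    apply Convex.norm_image_sub_le_of_norm_deriv_le
      (fun x hx => ((h_holo n).differentiableAt (hΩ_open.mem_nhds (hcb hx))))
      (fun x hx => le_trans (hM n x hx) (by linarith))
      (convex_closedBall _ _) (mem_closedBall_self (by positivity)) hwball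
  rw [dist_eq_norm]
  calc ‖f n w - f n z‖ ≤ (M+1) * ‖w - z‖ := hlip
    _ < (M+1) * η := by
        apply mul_lt_mul_of_pos_left _ (by linarith)
        rw [← dist_eq_norm]
        exact hdist
    _ ≤ (M+1) * (ε / (M+1)) := by
        apply mul_le_mul_of_nonneg_left (min_le_right _ _) (by linarith)
    _ = ε := by field_simp

end Bounds

open Filter

theorem montel_aux
    (Ω : Set ℂ) (hΩ_open : IsOpen Ω) (hΩ_ne : Ω.Nonempty)
    (f : ℕ → ℂ → ℂ) (h_holo : ∀ n, DifferentiableOn ℂ (f n) Ω)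
    (h_L1 : ∀ K ⊆ Ω, IsCompact K → ∃ C : ℝ, ∀ n, ∫ z in K, ‖f n z‖ ≤ C) :
    ∃ (φ : ℕ → ℕ), StrictMono φ ∧
      ∃ g : ℂ → ℂ, DifferentiableOn ℂ g Ω ∧
        TendstoLocallyUniformlyOn (fun k => f (φ k)) g atTop Ω ∧
        ∀ m : ℕ,
          TendstoLocallyUniformlyOn
            (fun k => iteratedDerivWithin m (f (φ k)) Ω)
            (iteratedDerivWithin m g Ω) atTop Ω := by
  classical
  haveI hLC : LocallyCompactSpace ↥Ω := hΩ_open.locallyCompactSpace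
  haveI : SigmaCompactSpace ↥Ω := sigmaCompactSpace_of_locallyCompact_secondCountable
  set G : ℕ → C(↥Ω, ℂ) := fun n => ⟨Ω.restrict (f n), (h_holo n).continuousOn.restrict⟩
    with hGdef
  have hEq : Equicontinuous (fun n => ⇑(G n)) := by
    intro x
    rw [equicontinuousAt_iff]
    intro ε hε
    obtain ⟨η, hη, h⟩ := equicont hΩ_open h_holo h_L1 x.1 x.2 ε hε
    refine ⟨η, hη, fun y hy n => ?_⟩
    rw [dist_comm]
    exact h y.1 y.2 (by rwa [Subtype.dist_eq] at hy) n
  have hPt : ∀ x : ↥Ω, ∃ Q : Set ℂ, IsCompact Q ∧ ∀ n, f n x.1 ∈ Q := by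
    intro x
    obtain ⟨M, hM0, hM⟩ := sup_bound hΩ_open h_holo h_L1
      (singleton_subset_iff.mpr x.2) isCompact_singleton
    exact ⟨closedBall 0 M, isCompact_closedBall _ _, fun n => by
      rw [mem_closedBall_zero_iff]; exact hM n x.1 rfl⟩
  have hclemb : IsClosedEmbedding
      ((UniformOnFun.ofFun {K : Set ↥Ω | IsCompact K}) ∘ (fun ψ : C(↥Ω, ℂ) => ⇑ψ)) := by
    refine ⟨ContinuousMap.isUniformEmbedding_toUniformOnFunIsCompact.isEmbedding, ?_⟩
    have : Set.range ((UniformOnFun.ofFun {K : Set ↥Ω | IsCompact K})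
        ∘ (fun ψ : C(↥Ω, ℂ) => ⇑ψ)) = {h | Continuous ((UniformOnFun.toFun _) h)} :=
      ContinuousMap.range_toUniformOnFunIsCompact
    rw [this]
    exact UniformOnFun.isClosed_setOf_continuous
      CompactlyCoherentSpace.isCoherentWith
  have hcomp : IsCompact (closure (Set.range G)) := by
    apply ArzelaAscoli.isCompact_closure_of_isClosedEmbedding (fun K hK => hK) hclemb
    · intro K _
      have hEq' : Equicontinuous (fun i : Set.range G => ⇑(i.1)) := by
        have hpick : ∀ i : Set.range G, ∃ n, G n = i.1 := fun i => i.2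
        choose pick hpick using hpick
        have heq : (fun i : Set.range G => ⇑(i.1)) = (fun n => ⇑(G n)) ∘ pick := by
          funext i
          rw [Function.comp_apply, hpick i]
        rw [heq]
        exact hEq.comp pick
      exact hEq'.equicontinuousOn K
    · intro K _ x _
      obtain ⟨Q, hQ, h⟩ := hPt x
      refine ⟨Q, hQ, fun i hi => ?_⟩
      obtain ⟨n, rfl⟩ := hi
      exact h n
  have hseq : IsSeqCompact (closure (Set.range G)) := hcomp.isSeqCompact
  obtain ⟨g₀, -, φ, hφ, hconv⟩ := hseq (x := fun n => G n)
    (fun n => subset_closure (mem_range_self n))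
  have hlu : TendstoLocallyUniformly (fun k x => (G (φ k)) x) (⇑g₀) atTop :=
    ContinuousMap.tendsto_iff_tendstoLocallyUniformly.mp hconv
  set g : ℂ → ℂ := fun w => if h : w ∈ Ω then g₀ ⟨w, h⟩ else 0 with hgdef
  have hTLU : TendstoLocallyUniformlyOn (fun k => f (φ k)) g atTop Ω := by
    rw [tendstoLocallyUniformlyOn_iff_forall_isCompact hΩ_open]
    intro K hKΩ hK
    have hK' : IsCompact (Subtype.val ⁻¹' K : Set ↥Ω) := by
      rw [Subtype.isCompact_iff, Set.image_preimage_eq_of_subset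
        (by rwa [Subtype.range_coe])]
      exact hK
    have hU : TendstoUniformlyOn (fun k x => (G (φ k)) x) (⇑g₀) atTop
        (Subtype.val ⁻¹' K) :=
      (tendstoLocallyUniformlyOn_iff_forall_isCompact isOpen_univ).mp
        hlu.tendstoLocallyUniformlyOn _ (subset_univ _) hK'
    rw [Metric.tendstoUniformlyOn_iff] at hU ⊢
    intro ε hε
    filter_upwards [hU ε hε] with k h w hw
    have h2 := h ⟨w, hKΩ hw⟩ hw
    simp only [hgdef, dif_pos (hKΩ hw)]
    exact h2
  have hg : DifferentiableOn ℂ g Ω :=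
    hTLU.differentiableOn (Eventually.of_forall (fun k => h_holo (φ k))) hΩ_open
  have hiter : ∀ m : ℕ,
      TendstoLocallyUniformlyOn (fun k => deriv^[m] (f (φ k))) (deriv^[m] g) atTop Ω
      ∧ (∀ k, DifferentiableOn ℂ (deriv^[m] (f (φ k))) Ω)
      ∧ DifferentiableOn ℂ (deriv^[m] g) Ω := by
    intro m
    induction m with
    | zero => exact ⟨hTLU, fun k => h_holo (φ k), hg⟩
    | succ m ih =>
      obtain ⟨h1, h2, h3⟩ := ih
      have hd := h1.deriv (Eventually.of_forall h2) hΩ_open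
      simp only [Function.iterate_succ_apply']
      exact ⟨hd, fun k => (((h2 k).analyticOnNhd hΩ_open).deriv).differentiableOn,
        ((h3.analyticOnNhd hΩ_open).deriv).differentiableOn⟩
  refine ⟨φ, hφ, g, hg, hTLU, fun m => ?_⟩
  have hEqOn : ∀ h : ℂ → ℂ, Set.EqOn (deriv^[m] h) (iteratedDerivWithin m h Ω) Ω := by
    intro h w hw
    rw [← iteratedDeriv_eq_iterate, iteratedDerivWithin_eq_iteratedFDerivWithin,
      iteratedFDerivWithin_of_isOpen m hΩ_open hw, iteratedDeriv_eq_iteratedFDeriv]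
  exact ((hiter m).1.congr (fun k => hEqOn _)).congr_right (hEqOn g)

end MontelAux

/-- **Montel's theorem under local `L¹` bounds** (Bär's Montel theorem for the
Cauchy–Riemann operator): a sequence of holomorphic functions on an open set `Ω ⊆ ℂ`
which is locally bounded in `L¹` has a subsequence converging locally uniformly on `Ω`
to a holomorphic function, together with all of its derivatives. -/
theorem montel_L1_locally_bounded
    (Ω : Set ℂ) (hΩ_open : IsOpen Ω) (hΩ_ne : Ω.Nonempty)
    (f : ℕ → ℂ → ℂ) (h_holo : ∀ n, DifferentiableOn ℂ (f n) Ω)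
    (h_L1 : ∀ K ⊆ Ω, IsCompact K → ∃ C : ℝ, ∀ n, ∫ z in K, ‖f n z‖ ≤ C) :
    ∃ (φ : ℕ → ℕ), StrictMono φ ∧
      ∃ g : ℂ → ℂ, DifferentiableOn ℂ g Ω ∧
        TendstoLocallyUniformlyOn (fun k => f (φ k)) g atTop Ω ∧
        ∀ m : ℕ,
          TendstoLocallyUniformlyOn
            (fun k => iteratedDerivWithin m (f (φ k)) Ω)
            (iteratedDerivWithin m g Ω) atTop Ω := by
  exact montel_aux Ω hΩ_open hΩ_ne f h_holo h_L1
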